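/- Let 0 < α < 1 and define V_α on L²(0,1) by (V_α f)(x) = ∫_0^{x^α} f(t) dt. For each n ∈ ℕ, the function f_{n+1}(x) = x^{α/(1-α)} ( (ln x)^n + ∑_{k=1}^n (n!/(n-k)!) · α^{k(k-1)/2}(1-α)^k / ((1-α)(1-α²)⋯(1-α^k)) · (ln x)^{n-k} ) belongs to L²(0,1) and satisfies V_α f_{n+1} = (1-α)α^n f_{n+1}. -/

import Mathlib

open MeasureTheory Filter

private lemma aux_tri (m : ℕ) : (m+1)*m/2 = m*(m-1)/2 + m := by
  cases m with
  | zero => simp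
  | succ j =>
    obtain ⟨c, hc⟩ := Nat.even_mul_succ_self j
    have h1 : (j+1+1)*(j+1) = j*(j+1) + 2*(j+1) := by ring
    have h2 : (j+1)*(j+1-1) = j*(j+1) := by simp [Nat.mul_comm]
    rw [h1, h2]
    omega

private lemma aux_tendsto {r : ℝ} (hr : 0 < r) (m : ℕ) :
    Tendsto (fun x : ℝ => x ^ r * Real.log x ^ m) (nhdsWithin 0 (Set.Ioi 0)) (nhds 0) := by
  cases m with
  | zero =>
    simp only [pow_zero, mul_one]
    have : Tendsto (fun x : ℝ => x ^ r) (nhds 0) (nhds ((0:ℝ) ^ r)) :=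
      (Real.continuousAt_rpow_const 0 r (Or.inr hr.le)).tendsto
    rw [Real.zero_rpow hr.ne'] at this
    exact this.mono_left nhdsWithin_le_nhds
  | succ j =>
    have hpos : 0 < r / (j+1 : ℕ) := by positivity
    have h := (tendsto_log_mul_rpow_nhdsGT_zero hpos).pow (j+1)
    rw [zero_pow (Nat.succ_ne_zero j)] at h
    refine h.congr' ?_
    filter_upwards [self_mem_nhdsWithin] with x (hx : 0 < x)
    rw [mul_pow, ← Real.rpow_natCast (x ^ (r / (j+1:ℕ))), ← Real.rpow_mul hx.le]
    have : r / (j+1:ℕ) * (j+1:ℕ) = r := by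
      field_simp
    rw [this, mul_comm]

private lemma aux_contOn {r : ℝ} (hr : 0 < r) (n : ℕ) (e : ℕ → ℝ) :
    ContinuousOn (fun x : ℝ => x ^ r * ∑ k ∈ Finset.range (n+1), e k * Real.log x ^ (n - k))
      (Set.Icc 0 1) := by
  intro x hx
  rcases eq_or_lt_of_le hx.1 with h0 | h0
  · -- x = 0
    subst h0
    have hval : (fun x : ℝ => x ^ r * ∑ k ∈ Finset.range (n+1), e k * Real.log x ^ (n - k))
        (0:ℝ) = 0 := by
      show (0:ℝ) ^ r * _ = 0
      simp [Real.zero_rpow hr.ne']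
    refine ContinuousWithinAt.mono ?_ (Set.Icc_subset_Ici_self)
    unfold ContinuousWithinAt
    rw [hval]
    have hsplit : Set.Ici (0:ℝ) = {0} ∪ Set.Ioi 0 := by
      ext t
      simp only [Set.mem_Ici, Set.mem_union, Set.mem_singleton_iff, Set.mem_Ioi]
      constructor
      · intro h
        rcases eq_or_lt_of_le h with h' | h'
        exacts [Or.inl h'.symm, Or.inr h']
      · rintro (rfl | h)
        exacts [le_refl _, le_of_lt h]
    rw [hsplit, nhdsWithin_union]
    rw [Filter.tendsto_sup]
    constructor
    · rw [nhdsWithin_singleton]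
      rw [Filter.tendsto_pure_left]
      intro s hs
      have h0' : (0:ℝ) ^ r * ∑ k ∈ Finset.range (n+1), e k * Real.log 0 ^ (n - k) = 0 := by
        simp [Real.zero_rpow hr.ne']
      rw [h0']
      exact mem_of_mem_nhds hs
    · have : Tendsto (fun x : ℝ => ∑ k ∈ Finset.range (n+1),
          e k * (x ^ r * Real.log x ^ (n - k))) (nhdsWithin 0 (Set.Ioi 0)) (nhds 0) := by
        have := tendsto_finset_sum (Finset.range (n+1))
          (fun k _ => ((aux_tendsto hr (n - k)).const_mul (e k)))
        simpa using this
      refine this.congr (fun y => ?_)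
      rw [Finset.mul_sum]
      exact Finset.sum_congr rfl (fun k _ => by ring)
  · -- x > 0
    apply ContinuousAt.continuousWithinAt
    exact (Real.continuousAt_rpow_const x r (Or.inl h0.ne')).mul
      (tendsto_finset_sum _ (fun k _ =>
        ((Real.continuousAt_log h0.ne').pow (n - k)).const_mul (e k)))

noncomputable def cc (α : ℝ) (n k : ℕ) : ℝ :=
  ((n.factorial / (n - k).factorial : ℕ) : ℝ) *
    (α ^ (k * (k - 1) / 2) * (1 - α) ^ k / ∏ i ∈ Finset.Icc 1 k, (1 - α ^ i))

noncomputable def dd (α : ℝ) (n k : ℕ) : ℝ := (1 - α) * α ^ k * cc α n k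

lemma cc_zero (α : ℝ) (n : ℕ) : cc α n 0 = 1 := by
  simp [cc, Nat.div_self n.factorial_pos]

lemma prod_ne (α : ℝ) (hα0 : 0 < α) (hα1 : α < 1) (k : ℕ) :
    (∏ i ∈ Finset.Icc 1 k, (1 - α ^ i)) ≠ 0 := by
  refine Finset.prod_ne_zero_iff.2 fun i hi => ?_
  have hi1 : 1 ≤ i := (Finset.mem_Icc.1 hi).1
  have : α ^ i < 1 := pow_lt_one₀ hα0.le hα1 (by omega)
  linarith

lemma cc_rec {α : ℝ} (hα0 : 0 < α) (hα1 : α < 1) {n k : ℕ} (hk1 : 1 ≤ k) (hkn : k ≤ n) :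
    (1 - α ^ k) * cc α n k = ((n - k + 1 : ℕ) : ℝ) * α ^ (k - 1) * (1 - α) * cc α n (k - 1) := by
  obtain ⟨m, rfl⟩ : ∃ m, k = m + 1 := ⟨k - 1, by omega⟩
  have hmn : m ≤ n := by omega
  have hdf : (n.factorial / (n - (m+1)).factorial : ℕ)
      = (n - m) * (n.factorial / (n - m).factorial : ℕ) := by
    rw [← Nat.descFactorial_eq_div (by omega : m + 1 ≤ n),
      ← Nat.descFactorial_eq_div hmn, Nat.descFactorial_succ]
  have hexp : (m+1) * m / 2 = m * (m - 1) / 2 + m := aux_tri m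
  have hprod : (∏ i ∈ Finset.Icc 1 (m+1), (1 - α ^ i))
      = (∏ i ∈ Finset.Icc 1 m, (1 - α ^ i)) * (1 - α ^ (m+1)) :=
    Finset.prod_Icc_succ_top (by omega) _
  have hcast : ((n - (m+1) + 1 : ℕ) : ℝ) = ((n - m : ℕ) : ℝ) := by
    congr 1; omega
  have hP : (∏ i ∈ Finset.Icc 1 m, (1 - α ^ i)) ≠ 0 := prod_ne α hα0 hα1 m
  have hP1 : (1 - α ^ (m+1)) ≠ 0 := by
    have : α ^ (m+1) < 1 := pow_lt_one₀ hα0.le hα1 (by omega)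
    linarith
  simp only [cc, hdf, hexp, hprod, hcast, Nat.add_sub_cancel]
  push_cast
  rw [pow_add]
  have hP1' : (1:ℝ) - α * α ^ m ≠ 0 := by
    intro h; apply hP1; rw [pow_succ]; linear_combination h
  have hP1'' : (1:ℝ) - α ^ m * α ≠ 0 := by
    intro h; apply hP1; rw [pow_succ]; linear_combination h
  field_simp
  ring

lemma key_id {α : ℝ} (hα0 : 0 < α) (hα1 : α < 1) (n : ℕ) (u : ℝ) :
    ∑ k ∈ Finset.range (n+1), cc α n k * u ^ (n - k)
      = (1/(1-α)) * ∑ k ∈ Finset.range (n+1), dd α n k * u ^ (n - k)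
        + ∑ k ∈ Finset.range (n+1), dd α n k * (((n - k : ℕ) : ℝ) * u ^ (n - k - 1)) := by
  have h1α : (1:ℝ) - α ≠ 0 := by linarith
  have hsum1 : ∑ k ∈ Finset.range (n+1), (1 - α ^ k) * cc α n k * u ^ (n - k)
      = ∑ k ∈ Finset.range (n+1), dd α n k * (((n - k : ℕ) : ℝ) * u ^ (n - k - 1)) := by
    have hL : ∑ k ∈ Finset.range (n+1), (1 - α ^ k) * cc α n k * u ^ (n - k)
        = ∑ k ∈ Finset.range n, (1 - α ^ (k+1)) * cc α n (k+1) * u ^ (n - (k+1)) := by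
      rw [Finset.sum_range_succ']
      simp
    have hR : ∑ k ∈ Finset.range (n+1), dd α n k * (((n - k : ℕ) : ℝ) * u ^ (n - k - 1))
        = ∑ k ∈ Finset.range n, dd α n k * (((n - k : ℕ) : ℝ) * u ^ (n - k - 1)) := by
      rw [Finset.sum_range_succ]
      simp
    rw [hL, hR]
    refine Finset.sum_congr rfl fun k hk => ?_
    have hkn : k < n := Finset.mem_range.1 hk
    have hrec := cc_rec hα0 hα1 (by omega : 1 ≤ k + 1) (by omega : k + 1 ≤ n)
    simp only [Nat.add_sub_cancel] at hrec
    have hc1 : ((n - (k+1) + 1 : ℕ) : ℝ) = ((n - k : ℕ) : ℝ) := by congr 1; omega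
    rw [hc1] at hrec
    have he : n - (k+1) = n - k - 1 := by omega
    rw [he] at *
    rw [hrec]
    simp only [dd]
    ring
  rw [← hsum1, Finset.mul_sum, ← Finset.sum_add_distrib]
  refine Finset.sum_congr rfl fun k _ => ?_
  simp only [dd]
  field_simp
  ring

lemma scale_id {α : ℝ} (n : ℕ) (u : ℝ) :
    ∑ k ∈ Finset.range (n+1), dd α n k * (α * u) ^ (n - k)
      = (1 - α) * α ^ n * ∑ k ∈ Finset.range (n+1), cc α n k * u ^ (n - k) := by
  rw [Finset.mul_sum]
  refine Finset.sum_congr rfl fun k hk => ?_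
  have hkn : k ≤ n := by have := Finset.mem_range.1 hk; omega
  have hpow : α ^ k * α ^ (n - k) = α ^ n := by
    rw [← pow_add]; congr 1; omega
  simp only [dd]
  rw [mul_pow]
  calc (1 - α) * α ^ k * cc α n k * (α ^ (n-k) * u ^ (n-k))
      = (1 - α) * (α ^ k * α ^ (n-k)) * cc α n k * u ^ (n-k) := by ring
    _ = (1 - α) * α ^ n * (cc α n k * u ^ (n-k)) := by rw [hpow]; ring

theorem stmt_7 (α : ℝ) (hα0 : 0 < α) (hα1 : α < 1) (n : ℕ)
    (f : ℝ → ℝ)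
    (hf : ∀ x : ℝ, f x = x ^ (α / (1 - α)) *
      ((Real.log x) ^ n + ∑ k ∈ Finset.Icc 1 n,
        ((n.factorial / (n - k).factorial : ℕ) : ℝ) *
          (α ^ (k * (k - 1) / 2) * (1 - α) ^ k / ∏ i ∈ Finset.Icc 1 k, (1 - α ^ i)) *
          (Real.log x) ^ (n - k))) :
    MemLp f 2 (volume.restrict (Set.Ioo (0:ℝ) 1)) ∧
    ∀ x ∈ Set.Icc (0:ℝ) 1, (∫ t in (0:ℝ)..(x ^ α), f t) = (1 - α) * α ^ n * f x := by
  have h1α : (0:ℝ) < 1 - α := by linarith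
  set β : ℝ := α / (1 - α) with hβ
  set γ : ℝ := 1 / (1 - α) with hγ
  have hβpos : 0 < β := div_pos hα0 h1α
  have hγpos : 0 < γ := div_pos one_pos h1α
  have hβγ : γ - 1 = β := by
    rw [hβ, hγ]
    field_simp
    ring
  -- rewrite f in terms of cc
  have hf' : ∀ x : ℝ, f x = x ^ β * ∑ k ∈ Finset.range (n+1), cc α n k * Real.log x ^ (n - k) := by
    intro x
    rw [hf x]
    congr 1
    have hins : Finset.range (n+1) = insert 0 (Finset.Icc 1 n) := by
      ext m; simp [Finset.mem_Icc, Finset.mem_range]; omega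
    rw [hins, Finset.sum_insert (by simp)]
    rw [cc_zero]
    simp only [Nat.sub_zero, one_mul]
    congr 1
  -- continuity of f on [0,1]
  have hcf : ContinuousOn f (Set.Icc 0 1) := by
    have h := aux_contOn hβpos n (cc α n)
    exact h.congr fun x _ => hf' x
  constructor
  · -- Memℒp
    obtain ⟨C, hC⟩ := isCompact_Icc.exists_bound_of_continuousOn hcf
    refine MemLp.of_bound ?_ C ?_
    · exact ((hcf.mono Set.Ioo_subset_Icc_self).aestronglyMeasurable measurableSet_Ioo)
    · filter_upwards [ae_restrict_mem measurableSet_Ioo] with x hx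
      exact hC x (Set.Ioo_subset_Icc_self hx)
  · -- eigenvalue equation
    intro x hx
    rcases eq_or_lt_of_le hx.1 with h0 | h0
    · -- x = 0
      subst h0
      rw [Real.zero_rpow hα0.ne', intervalIntegral.integral_same]
      have : f 0 = 0 := by
        rw [hf' 0, Real.zero_rpow hβpos.ne', zero_mul]
      rw [this, mul_zero]
    · -- 0 < x
      set y : ℝ := x ^ α with hy
      have hy0 : 0 < y := Real.rpow_pos_of_pos h0 α
      have hy1 : y ≤ 1 := Real.rpow_le_one hx.1 hx.2 hα0.le
      set F : ℝ → ℝ := fun t => t ^ γ * ∑ k ∈ Finset.range (n+1), dd α n k * Real.log t ^ (n - k)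
        with hF
      have hcF : ContinuousOn F (Set.Icc 0 y) :=
        (aux_contOn hγpos n (dd α n)).mono (Set.Icc_subset_Icc_right hy1)
      have hderiv : ∀ t ∈ Set.Ioo (0:ℝ) y, HasDerivAt F (f t) t := by
        intro t ht
        have ht0 : 0 < t := ht.1
        have hsum : HasDerivAt
            (fun s => ∑ k ∈ Finset.range (n+1), dd α n k * Real.log s ^ (n - k))
            (∑ k ∈ Finset.range (n+1), dd α n k * (((n-k:ℕ):ℝ) * Real.log t ^ (n-k-1) * t⁻¹)) t :=
          HasDerivAt.fun_sum fun k _ => ((Real.hasDerivAt_log ht0.ne').pow (n-k)).const_mul (dd α n k)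
        have hpow : HasDerivAt (fun s : ℝ => s ^ γ) (γ * t ^ (γ - 1)) t :=
          Real.hasDerivAt_rpow_const (Or.inl ht0.ne')
        have h := hpow.mul hsum
        refine h.congr_deriv ?_
        have e1 : t ^ γ * t⁻¹ = t ^ β := by
          rw [← hβγ, Real.rpow_sub ht0, Real.rpow_one, div_eq_mul_inv]
        have e2 : ∑ k ∈ Finset.range (n+1), dd α n k * (((n-k:ℕ):ℝ) * Real.log t ^ (n-k-1) * t⁻¹)
            = (∑ k ∈ Finset.range (n+1), dd α n k * (((n-k:ℕ):ℝ) * Real.log t ^ (n-k-1))) * t⁻¹ := by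
          rw [Finset.sum_mul]
          exact Finset.sum_congr rfl fun k _ => by ring
        rw [e2, hf' t, key_id hα0 hα1 n (Real.log t), hβγ, ← e1]
        ring
      have hif : IntervalIntegrable f volume 0 y := by
        apply ContinuousOn.intervalIntegrable
        rw [Set.uIcc_of_le hy0.le]
        exact hcf.mono (Set.Icc_subset_Icc_right hy1)
      have hFTC := intervalIntegral.integral_eq_sub_of_hasDeriv_right_of_le hy0.le hcF
        (fun t ht => (hderiv t ht).hasDerivWithinAt) hif
      have hF0 : F 0 = 0 := by
        rw [hF]
        show (0:ℝ) ^ γ * _ = 0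
        rw [Real.zero_rpow hγpos.ne', zero_mul]
      have hFy : F y = (1 - α) * α ^ n * f x := by
        rw [hF]
        show y ^ γ * ∑ k ∈ Finset.range (n+1), dd α n k * Real.log y ^ (n - k)
          = (1 - α) * α ^ n * f x
        have hyg : y ^ γ = x ^ β := by
          show (x ^ α) ^ γ = x ^ β
          rw [← Real.rpow_mul hx.1]
          congr 1
          rw [hβ, hγ]
          field_simp
        have hlog : Real.log y = α * Real.log x := Real.log_rpow h0 α
        rw [hyg, hlog]
        have := scale_id (α := α) n (Real.log x)
        rw [this, hf' x]
        ring
      rw [hFTC, hF0, hFy, sub_zero]
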